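/- Let (V, Ω, q) be a nondegenerate k-symplectic complex vector space (dim Ω = k, q nondegenerate). Then dim_ℂ V = 2^{⌊(k−1)/2⌋} · m for some positive integer m. In particular 2^{⌊(k−1)/2⌋} divides dim_ℂ V. -/

import Mathlib

set_option synthInstance.maxHeartbeats 400000
set_option maxHeartbeats 800000

open Module LinearMap

universe u

theorem anticomm_pow_dvd (m : ℕ) : ∀ (W : Type u) [AddCommGroup W] [Module ℂ W]
    [FiniteDimensional ℂ W] (J : Fin m → Module.End ℂ W), (∀ i, J i * J i = -1) →
    (∀ i j, i ≠ j → J i * J j + J j * J i = 0) →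
    2 ^ (m / 2) ∣ finrank ℂ W := by
  induction m using Nat.strong_induction_on with
  | _ m ih =>
  intro W _ _ _ J hsq hanti
  match m with
  | 0 => simpa using Dvd.intro _ rfl
  | 1 => simpa using Dvd.intro _ rfl
  | (p+2) =>
    have hsq' : ∀ (i : Fin (p+2)) (x : W), J i (J i x) = -x := by
      intro i x
      have := DFunLike.congr_fun (hsq i) x
      simpa [Module.End.mul_apply] using this
    have hac : ∀ (i j : Fin (p+2)), i ≠ j → ∀ x : W, J i (J j x) = -(J j (J i x)) := by
      intro i j hij x
      have := DFunLike.congr_fun (hanti i j hij) x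
      simp only [LinearMap.add_apply, Module.End.mul_apply, LinearMap.zero_apply] at this
      exact eq_neg_of_add_eq_zero_left this
    set I : ℂ := Complex.I with hI
    have hI2 : I * I = -1 := Complex.I_mul_I
    have hIne : I ≠ 0 := Complex.I_ne_zero
    set J0 : Module.End ℂ W := J 0 with hJ0
    set J1 : Module.End ℂ W := J 1 with hJ1
    have h01 : (0 : Fin (p+2)) ≠ 1 := Fin.ne_of_val_ne (by simp)
    set Wp : Submodule ℂ W := LinearMap.ker (J0 - I • 1) with hWp
    set Wm : Submodule ℂ W := LinearMap.ker (J0 + I • 1) with hWm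
    have memp : ∀ x : W, x ∈ Wp ↔ J0 x = I • x := by
      intro x
      simp [hWp, LinearMap.mem_ker, sub_eq_zero]
    have memm : ∀ x : W, x ∈ Wm ↔ J0 x = -(I • x) := by
      intro x
      simp [hWm, LinearMap.mem_ker, add_eq_zero_iff_eq_neg]
    -- sup = top
    have hsup : Wp ⊔ Wm = ⊤ := by
      rw [eq_top_iff]
      intro x _
      have hv : I • x + J0 x ∈ Wp := by
        rw [memp]
        rw [map_add, map_smul, hsq' 0 x]
        rw [smul_add, smul_smul, hI2]
        module
      have hu : I • x - J0 x ∈ Wm := by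
        rw [memm]
        rw [map_sub, map_smul, hsq' 0 x]
        rw [smul_sub, smul_smul, hI2]
        module
      have h2 : ((2 * I)⁻¹ * (2 * I)) • x ∈ Wp ⊔ Wm := by
        have : (2 * I) • x = (I • x + J0 x) + (I • x - J0 x) := by module
        rw [mul_smul, this]
        exact Submodule.smul_mem _ _ (Submodule.add_mem _
          (Submodule.mem_sup_left hv) (Submodule.mem_sup_right hu))
      rwa [inv_mul_cancel₀ (by simp [hIne]), one_smul] at h2
    have hinf : Wp ⊓ Wm = ⊥ := by
      rw [eq_bot_iff]
      intro x hx
      have h1 : J0 x = I • x := (memp x).1 hx.1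
      have h2 : J0 x = -(I • x) := (memm x).1 hx.2
      have : (2 * I) • x = 0 := by
        have := h1.symm.trans h2
        rw [eq_neg_iff_add_eq_zero] at this
        rw [← this]; module
      have hx0 : x = 0 := by
        rcases smul_eq_zero.1 this with h | h
        · exact absurd h (by simp [hIne])
        · exact h
      simp [hx0]
    -- J1 gives iso between Wp and Wm
    have hJ1inj : Function.Injective J1 := by
      intro x y hxy
      have : J1 (J1 x) = J1 (J1 y) := by rw [hxy]
      rwa [hsq' 1 x, hsq' 1 y, neg_inj] at this
    have hmapsPM : ∀ x ∈ Wp, J1 x ∈ Wm := by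
      intro x hx
      rw [memm]
      rw [hac 0 1 h01 x, (memp x).1 hx, map_smul]
    have hmapsMP : ∀ x ∈ Wm, J1 x ∈ Wp := by
      intro x hx
      rw [memp]
      rw [hac 0 1 h01 x, (memm x).1 hx, map_neg, map_smul, neg_neg]
    have hrank : finrank ℂ Wp = finrank ℂ Wm := by
      apply le_antisymm
      · apply LinearMap.finrank_le_finrank_of_injective (f := J1.restrict hmapsPM)
        intro x y hxy
        have := Subtype.ext_iff.1 hxy
        rw [LinearMap.restrict_apply, LinearMap.restrict_apply] at this
        exact Subtype.ext (hJ1inj (by simpa using this))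
      · apply LinearMap.finrank_le_finrank_of_injective (f := J1.restrict hmapsMP)
        intro x y hxy
        have := Subtype.ext_iff.1 hxy
        rw [LinearMap.restrict_apply, LinearMap.restrict_apply] at this
        exact Subtype.ext (hJ1inj (by simpa using this))
    have hdim2 : finrank ℂ W = 2 * finrank ℂ Wp := by
      have := Submodule.finrank_sup_add_finrank_inf_eq Wp Wm
      rw [hsup, hinf, finrank_top, finrank_bot, add_zero, ← hrank] at this
      omega
    -- the new operators on Wp
    set idx : Fin p → Fin (p+2) := fun j => ⟨(j : ℕ) + 2, by omega⟩ with hidx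
    have hidx1 : ∀ j, idx j ≠ 1 := fun j => Fin.ne_of_val_ne (by simp [hidx])
    have hidx0 : ∀ j, (0 : Fin (p+2)) ≠ idx j := fun j => Fin.ne_of_val_ne (by simp [hidx])
    have hidxinj : ∀ j j' : Fin p, j ≠ j' → idx j ≠ idx j' := by
      intro j j' h hh
      exact h (by ext; simpa [hidx, Fin.ext_iff] using hh)
    have hmapsK : ∀ (j : Fin p), ∀ x ∈ Wp, (J1 * J (idx j)) x ∈ Wp := by
      intro j x hx
      rw [memp, Module.End.mul_apply]
      rw [hac 0 1 h01, hac 0 (idx j) (hidx0 j), (memp x).1 hx]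
      simp [map_smul, hJ1]
    set K : Fin p → Module.End ℂ Wp := fun j => (J1 * J (idx j)).restrict (hmapsK j) with hKdef
    have hKapp : ∀ (j : Fin p) (x : Wp), ((K j x : W)) = J1 (J (idx j) (x : W)) := by
      intro j x
      simp [hKdef, LinearMap.restrict_apply, Module.End.mul_apply]
    have key : ∀ (a b : Fin (p+2)), a ≠ 1 → ∀ y : W,
        J1 (J a (J1 (J b y))) = J a (J b y) := by
      intro a b ha y
      rw [hac a 1 ha, map_neg, hsq' 1, neg_neg]
    have hKsq : ∀ j, K j * K j = -1 := by
      intro j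
      ext x
      have : (K j) ((K j) x) = -x := by
        apply Subtype.ext
        rw [hKapp, hKapp, key _ _ (hidx1 j), hsq' (idx j)]
        simp
      simpa [Module.End.mul_apply] using congrArg (Subtype.val) this
    have hKanti : ∀ i j, i ≠ j → K i * K j + K j * K i = 0 := by
      intro i j hij
      ext x
      have : ((K i) ((K j) x) : W) + ((K j) ((K i) x) : W) = 0 := by
        rw [hKapp, hKapp, hKapp, hKapp, key _ _ (hidx1 i), key _ _ (hidx1 j),
          hac (idx i) (idx j) (hidxinj i j hij)]
        simp
      have h0 : (K i) ((K j) x) + (K j) ((K i) x) = 0 := by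
        apply Subtype.ext
        push_cast
        simpa using this
      simpa [Module.End.mul_apply] using congrArg (Subtype.val) h0
    have hdvd : 2 ^ (p / 2) ∣ finrank ℂ Wp := ih p (by omega) Wp K hKsq hKanti
    have h2 : (p + 2) / 2 = p / 2 + 1 := by omega
    rw [h2, hdim2, pow_succ, mul_comm (2 ^ (p/2)) 2]
    exact mul_dvd_mul_left 2 hdvd

/-- a nondegenerate `k`-symplectic complex vector space `(V, Ω, q)`
satisfies `dim_ℂ V = 2^{⌊(k-1)/2⌋} · m` for some positive integer `m`; in
particular `2^{⌊(k-1)/2⌋}` divides `dim_ℂ V`. -/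
theorem stmt5 (V : Type*) [AddCommGroup V] [Module ℂ V] [FiniteDimensional ℂ V]
    (Ω : Type*) [AddCommGroup Ω] [Module ℂ Ω] [FiniteDimensional ℂ Ω]
    (n k : ℕ) (hn : 0 < n) (hdim : finrank ℂ V = 4 * n)
    (emb : Ω →ₗ[ℂ] LinearMap.BilinForm ℂ V) (hemb : Function.Injective emb)
    (halt : ∀ ω : Ω, (emb ω).IsAlt)
    (hk : finrank ℂ Ω = k)
    (q : QuadraticForm ℂ Ω)
    (hdich : ∀ ω : Ω, ω ≠ 0 →
      (q ω = 0 → finrank ℂ (LinearMap.ker (emb ω)) = 2 * n) ∧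
      (q ω ≠ 0 → LinearMap.ker (emb ω) = ⊥))
    (hqnd : ∀ x : Ω, (∀ y : Ω, QuadraticMap.polar q x y = 0) → x = 0) :
    (∃ m : ℕ, 0 < m ∧ finrank ℂ V = 2 ^ ((k - 1) / 2) * m) ∧
      2 ^ ((k - 1) / 2) ∣ finrank ℂ V := by
  suffices h : 2 ^ ((k - 1) / 2) ∣ finrank ℂ V by
    obtain ⟨m, hm⟩ := h
    have hmpos : 0 < m := by
      rcases Nat.eq_zero_or_pos m with rfl | h'
      · omega
      · exact h'
    exact ⟨⟨m, hmpos, hm⟩, ⟨m, hm⟩⟩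
  rcases Nat.eq_zero_or_pos k with rfl | hkpos
  · simp
  -- orthogonal basis
  have hsymm : (QuadraticMap.polarBilin q).IsSymm := by
    constructor
    intro x y
    simpa using QuadraticMap.polar_comm (⇑q) x y
  obtain ⟨v₀, hv₀⟩ := LinearMap.BilinForm.exists_orthogonal_basis hsymm
  set v : Fin k → Ω := fun i => v₀ ((finCongr hk).symm i) with hvdef
  have hvortho : ∀ i j : Fin k, i ≠ j → QuadraticMap.polar q (v i) (v j) = 0 := by
    intro i j hij
    have h' : (finCongr hk).symm i ≠ (finCongr hk).symm j :=
      fun h => hij ((finCongr hk).symm.injective h)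
    exact (QuadraticMap.isOrtho_polarBilin.mp (hv₀ h')).polar_eq_zero
  have hvne : ∀ i : Fin k, q (v i) ≠ 0 := by
    intro i h0
    have hpolzero : ∀ y : Ω, QuadraticMap.polar q (v i) y = 0 := by
      intro y
      have hmap : (QuadraticMap.polarBilin q (v i)) = 0 := by
        apply v₀.ext
        intro j
        rcases eq_or_ne ((finCongr hk).symm i) j with heq | hij
        · rw [← heq]
          show QuadraticMap.polarBilin q (v i) (v i) = _
          rw [QuadraticMap.polarBilin_apply_apply, QuadraticMap.polar_self, h0]
          simp
        · have := (QuadraticMap.isOrtho_polarBilin.mp (hv₀ hij)).polar_eq_zero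
          simpa [QuadraticMap.polarBilin_apply_apply, hvdef] using this
      have := DFunLike.congr_fun hmap y
      simpa using this
    have := hqnd _ hpolzero
    exact Basis.ne_zero v₀ _ (by simpa [hvdef] using this)
  -- normalize the basis vectors
  have hsqrt : ∀ i : Fin k, ∃ s : ℂ, q (s • v i) = 1 := by
    intro i
    obtain ⟨s, hs⟩ := IsAlgClosed.exists_pow_nat_eq ((q (v i))⁻¹) (n := 2) (by norm_num)
    refine ⟨s, ?_⟩
    rw [QuadraticMap.map_smul, show s*s = s^2 by ring, hs, smul_eq_mul]
    exact inv_mul_cancel₀ (hvne i)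
  choose s hs using hsqrt
  set w : Fin k → Ω := fun i => s i • v i with hwdef
  have hw1 : ∀ i, q (w i) = 1 := hs
  have hwortho : ∀ i j : Fin k, i ≠ j → QuadraticMap.polar q (w i) (w j) = 0 := by
    intro i j hij
    rw [hwdef]
    simp only [QuadraticMap.polar_smul_left, QuadraticMap.polar_smul_right, hvortho i j hij,
      smul_zero]
  -- the invertible base form
  set e₁ : Ω := w ⟨0, hkpos⟩ with he₁
  have hqe₁ : q e₁ = 1 := hw1 _
  have he₁ne : e₁ ≠ 0 := fun h => by simp [h, QuadraticMap.map_zero] at hqe₁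
  have hkerbot : LinearMap.ker (emb e₁) = ⊥ :=
    (hdich e₁ he₁ne).2 (by rw [hqe₁]; exact one_ne_zero)
  have hAinj : Function.Injective (emb e₁) := by
    rw [← LinearMap.ker_eq_bot]; exact hkerbot
  set E : V ≃ₗ[ℂ] (V →ₗ[ℂ] ℂ) :=
    LinearMap.linearEquivOfInjective (emb e₁) hAinj
      (Subspace.dual_finrank_eq (K := ℂ) (V := V)).symm with hE
  have hEapp : ∀ x : V, E x = emb e₁ x := fun x => rfl
  set Jmap : Ω → Module.End ℂ V := fun τ => E.symm.toLinearMap ∘ₗ emb τ with hJmap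
  have hJapp : ∀ (τ : Ω) (x : V), Jmap τ x = E.symm (emb τ x) := fun τ x => rfl
  -- the key squaring identity
  have keysq : ∀ τ : Ω, QuadraticMap.polar q e₁ τ = 0 → ∀ c : ℂ, q τ = c → c ≠ 0 →
      ∀ x : V, (Jmap τ) ((Jmap τ) x) = (-c) • x := by
    intro τ hpol c hqτ hc x
    obtain ⟨l, hl⟩ := IsAlgClosed.exists_pow_nat_eq (-c) (n := 2) (by norm_num)
    have hlne : l ≠ 0 := by
      intro h
      apply hc
      have h0 : (0:ℂ) = -c := by rw [← hl, h]; ring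
      exact neg_eq_zero.mp h0.symm
    -- eigenspace dimensions
    have hKdim : ∀ l' : ℂ, l' ^ 2 = -c → l' ≠ 0 →
        finrank ℂ (LinearMap.ker (Jmap τ - l' • 1)) = 2 * n := by
      intro l' hl' hl'ne
      set ω : Ω := τ - l' • e₁ with hω
      have hωne : ω ≠ 0 := by
        intro h
        have hτ : τ = l' • e₁ := by rwa [hω, sub_eq_zero] at h
        rw [hτ, QuadraticMap.polar_smul_right, QuadraticMap.polar_self] at hpol
        rw [hqe₁] at hpol
        have : l' * 2 = 0 := by simpa [smul_eq_mul, two_smul] using hpol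
        exact hl'ne (by simpa using mul_eq_zero.mp this |>.resolve_right two_ne_zero)
      have hqω : q ω = 0 := by
        have hexp : q (τ + (-l') • e₁) =
            q τ + q ((-l') • e₁) + QuadraticMap.polar q τ ((-l') • e₁) := by
          rw [QuadraticMap.polar]; ring
        rw [hω, sub_eq_add_neg, ← neg_smul, hexp, hqτ, QuadraticMap.map_smul, hqe₁,
          QuadraticMap.polar_smul_right, QuadraticMap.polar_comm, hpol]
        rw [show (-l') * -l' = l' ^ 2 by ring, hl']
        simp
      have hker2n : finrank ℂ (LinearMap.ker (emb ω)) = 2 * n := (hdich ω hωne).1 hqω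
      have hembω : emb ω = emb τ - l' • emb e₁ := by rw [hω, map_sub, map_smul]
      have hkereq : LinearMap.ker (Jmap τ - l' • 1) = LinearMap.ker (emb ω) := by
        ext x
        simp only [LinearMap.mem_ker, hembω, LinearMap.sub_apply, LinearMap.smul_apply,
          Module.End.one_apply, sub_eq_zero]
        rw [hJapp, E.symm_apply_eq, map_smul, hEapp]
      rw [hkereq]; exact hker2n
    have hmem : ∀ (a : ℂ) (y : V), y ∈ LinearMap.ker (Jmap τ - a • 1) ↔ Jmap τ y = a • y := by
      intro a y
      simp [LinearMap.mem_ker, LinearMap.sub_apply, LinearMap.smul_apply, Module.End.one_apply,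
        sub_eq_zero]
    set Kp := LinearMap.ker (Jmap τ - l • 1) with hKp
    set Km := LinearMap.ker (Jmap τ - (-l) • 1) with hKm
    have hdimp : finrank ℂ Kp = 2 * n := hKdim l hl hlne
    have hdimm : finrank ℂ Km = 2 * n :=
      hKdim (-l) (by rw [neg_pow]; simp [hl]) (neg_ne_zero.mpr hlne)
    have hinf : Kp ⊓ Km = ⊥ := by
      rw [eq_bot_iff]
      intro y hy
      have h1 : Jmap τ y = l • y := (hmem l y).1 hy.1
      have h2 : Jmap τ y = (-l) • y := (hmem (-l) y).1 hy.2
      have h3 : (l - -l) • y = 0 := by rw [sub_smul, ← h1, ← h2, sub_self]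
      have h4 : l - -l ≠ 0 := by
        intro h
        apply hlne
        have : (2:ℂ) * l = 0 := by rw [← h]; ring
        simpa using (mul_eq_zero.mp this).resolve_left two_ne_zero
      rcases smul_eq_zero.mp h3 with h | h
      · exact absurd h h4
      · simp [h]
    have hsup : Kp ⊔ Km = ⊤ := by
      apply Submodule.eq_top_of_finrank_eq
      have := Submodule.finrank_sup_add_finrank_inf_eq Kp Km
      rw [hinf, finrank_bot, add_zero, hdimp, hdimm] at this
      rw [this, hdim]
      omega
    have hx : x ∈ Kp ⊔ Km := by rw [hsup]; trivial
    rw [Submodule.mem_sup] at hx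
    obtain ⟨a, ha, b, hb, rfl⟩ := hx
    have hJa : Jmap τ a = l • a := (hmem l a).1 ha
    have hJb : Jmap τ b = (-l) • b := (hmem (-l) b).1 hb
    rw [map_add, hJa, hJb, map_add, map_smul, map_smul, hJa, hJb, smul_smul, smul_smul]
    rw [show l * l = -c by rw [← hl]; ring, show (-l) * -l = -c by rw [← hl]; ring, smul_add]
  -- the anticommuting family
  set idx : Fin (k-1) → Fin k := fun i => ⟨(i : ℕ) + 1, by omega⟩ with hidx
  have hidx0 : ∀ i, (⟨0, hkpos⟩ : Fin k) ≠ idx i := fun i => Fin.ne_of_val_ne (by simp [hidx])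
  have hidxinj : ∀ i j : Fin (k-1), i ≠ j → idx i ≠ idx j := by
    intro i j h hh
    exact h (by ext; simpa [hidx, Fin.ext_iff] using hh)
  set J : Fin (k-1) → Module.End ℂ V := fun i => Jmap (w (idx i)) with hJ
  have hJsqpt : ∀ (i : Fin (k-1)) (x : V), J i (J i x) = -x := by
    intro i x
    have := keysq (w (idx i)) (hwortho _ _ (hidx0 i)) 1 (hw1 _) one_ne_zero x
    simpa using this
  have hJsq : ∀ i, J i * J i = -1 := by
    intro i
    ext x
    simpa [Module.End.mul_apply] using hJsqpt i x
  have hJanti : ∀ i j, i ≠ j → J i * J j + J j * J i = 0 := by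
    intro i j hij
    have hpol : QuadraticMap.polar q e₁ (w (idx i) + w (idx j)) = 0 := by
      rw [QuadraticMap.polar_add_right, hwortho _ _ (hidx0 i), hwortho _ _ (hidx0 j), add_zero]
    have hq2 : q (w (idx i) + w (idx j)) = 2 := by
      have hexp : q (w (idx i) + w (idx j)) = q (w (idx i)) + q (w (idx j)) +
          QuadraticMap.polar q (w (idx i)) (w (idx j)) := by
        rw [QuadraticMap.polar]; ring
      rw [hexp, hw1, hw1, hwortho _ _ (hidxinj i j hij)]
      norm_num
    have hJadd : Jmap (w (idx i) + w (idx j)) = J i + J j := by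
      ext x
      simp [hJapp, hJ, map_add]
    ext x
    have h2 := keysq (w (idx i) + w (idx j)) hpol 2 hq2 two_ne_zero x
    rw [hJadd] at h2
    simp only [LinearMap.add_apply, map_add, hJsqpt] at h2
    have hgoal : J i (J j x) + J j (J i x) = 0 := by
      linear_combination (norm := module) h2
    simpa [Module.End.mul_apply, LinearMap.add_apply] using hgoal
  have := anticomm_pow_dvd (k-1) V J hJsq hJanti
  exact this
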